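/- For natural numbers n, a, b, d with b ≤ n and a+b ≥ d, the sum over k from 0 to n of C(a,k)·C(b,n-k)·C(n-k,d)·H(k) equals C(a+b-d, n-d)·C(b,d)·(H(n-d) - H(a+b-d) + H(a)), where H is the harmonic number. -/

import Mathlib

noncomputable def H (m : ℕ) : ℚ := ∑ j ∈ Finset.range m, (1 : ℚ) / (j + 1)

lemma H_succ (m : ℕ) : H (m + 1) = H m + 1 / (m + 1) := by
  simp [H, Finset.sum_range_succ]

lemma key (A s c : ℕ) :
    (((A + 1).choose (s + 1) : ℚ)) * (H (s + 1) - H (A + 1) + H c) =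
      (A.choose (s + 1) : ℚ) * (H (s + 1) - H A + H c) +
        (A.choose s : ℚ) * (H s - H A + H c) := by
  have hp : ((A + 1).choose (s + 1) : ℚ) = A.choose (s + 1) + A.choose s := by
    rw [Nat.choose_succ_succ']; push_cast; ring
  have hk : ((A : ℚ) + 1) * A.choose s
      = ((A.choose (s + 1) : ℚ) + A.choose s) * ((s : ℚ) + 1) := by
    rw [← hp]
    exact_mod_cast congrArg (Nat.cast : ℕ → ℚ) (Nat.add_one_mul_choose_eq A s)
  have hs1 : ((s : ℚ) + 1) ≠ 0 := by positivity
  have hA1 : ((A : ℚ) + 1) ≠ 0 := by positivity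
  rw [H_succ s, H_succ A, hp]
  field_simp
  linear_combination hk

lemma main (a b : ℕ) : ∀ n d : ℕ, b ≤ n →
    ∑ k ∈ Finset.range (n + 1),
      (a.choose k : ℚ) * b.choose (n - k) * (n - k).choose d * H k =
    ((a + b - d).choose (n - d) : ℚ) * b.choose d *
      (H (n - d) - H (a + b - d) + H a) := by
  induction b with
  | zero =>
    intro n d _
    have hL : ∑ k ∈ Finset.range (n + 1),
        (a.choose k : ℚ) * (Nat.choose 0 (n - k)) * (n - k).choose d * H k
        = (a.choose n : ℚ) * (Nat.choose 0 d) * H n := by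
      rw [Finset.sum_eq_single_of_mem n (Finset.self_mem_range_succ n)]
      · simp
      · intro k hk hkn
        have h0 : 0 < n - k := by
          have := Finset.mem_range.mp hk; omega
        rw [Nat.choose_eq_zero_of_lt h0]
        simp
    rw [hL]
    rcases Nat.eq_zero_or_pos d with hd | hd
    · subst hd; simp
    · rw [Nat.choose_eq_zero_of_lt hd]; simp
  | succ b IH =>
    intro n d hb
    obtain ⟨m, rfl⟩ : ∃ m, n = m + 1 := ⟨n - 1, by omega⟩
    have hbm : b ≤ m := by omega
    rcases d with _ | e
    · -- d = 0
      have hsplit : ∀ k ∈ Finset.range (m + 1),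
          (a.choose k : ℚ) * (b + 1).choose (m + 1 - k) * (m + 1 - k).choose 0 * H k =
            (a.choose k : ℚ) * b.choose (m + 1 - k) * (m + 1 - k).choose 0 * H k
            + (a.choose k : ℚ) * b.choose (m - k) * (m - k).choose 0 * H k := by
        intro k hk
        have hk' : k ≤ m := Nat.lt_succ_iff.mp (Finset.mem_range.mp hk)
        have h : m + 1 - k = (m - k) + 1 := by omega
        rw [h, Nat.choose_succ_succ']
        push_cast [Nat.choose_zero_right]; ring
      rw [Finset.sum_range_succ, Finset.sum_congr rfl hsplit, Finset.sum_add_distrib]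
      have e1 : ∑ k ∈ Finset.range (m + 1 + 1),
          (a.choose k : ℚ) * b.choose (m + 1 - k) * (m + 1 - k).choose 0 * H k
          = (∑ k ∈ Finset.range (m + 1),
              (a.choose k : ℚ) * b.choose (m + 1 - k) * (m + 1 - k).choose 0 * H k)
            + (a.choose (m + 1) : ℚ) * (b + 1).choose (m + 1 - (m + 1)) *
                (m + 1 - (m + 1)).choose 0 * H (m + 1) := by
        rw [Finset.sum_range_succ]; simp
      rw [add_right_comm, ← e1, IH (m + 1) 0 (by omega), IH m 0 hbm]
      have r1 : a + (b + 1) - 0 = (a + b) + 1 := by omega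
      have r2 : m + 1 - 0 = m + 1 := by omega
      have r3 : a + b - 0 = a + b := by omega
      have r4 : m - 0 = m := by omega
      rw [r1, r2, r3, r4]
      simp only [Nat.choose_zero_right]
      push_cast
      linear_combination (-1 : ℚ) * key (a + b) m a
    · -- d = e + 1
      have hsplit : ∀ k ∈ Finset.range (m + 1),
          (a.choose k : ℚ) * (b + 1).choose (m + 1 - k) * (m + 1 - k).choose (e + 1) * H k =
            (a.choose k : ℚ) * b.choose (m + 1 - k) * (m + 1 - k).choose (e + 1) * H k
            + (a.choose k : ℚ) * b.choose (m - k) * (m - k).choose (e + 1) * H k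
            + (a.choose k : ℚ) * b.choose (m - k) * (m - k).choose e * H k := by
        intro k hk
        have hk' : k ≤ m := Nat.lt_succ_iff.mp (Finset.mem_range.mp hk)
        have h : m + 1 - k = (m - k) + 1 := by omega
        rw [h, Nat.choose_succ_succ' b (m - k), Nat.choose_succ_succ' (m - k) e]
        push_cast; ring
      have hlast : (a.choose (m + 1) : ℚ) * (b + 1).choose (m + 1 - (m + 1)) *
          (m + 1 - (m + 1)).choose (e + 1) * H (m + 1) = 0 := by simp
      rw [Finset.sum_range_succ, hlast, add_zero, Finset.sum_congr rfl hsplit,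
        Finset.sum_add_distrib, Finset.sum_add_distrib]
      have e1 : ∑ k ∈ Finset.range (m + 1 + 1),
          (a.choose k : ℚ) * b.choose (m + 1 - k) * (m + 1 - k).choose (e + 1) * H k
          = ∑ k ∈ Finset.range (m + 1),
              (a.choose k : ℚ) * b.choose (m + 1 - k) * (m + 1 - k).choose (e + 1) * H k := by
        rw [Finset.sum_range_succ]; simp
      rw [← e1, IH (m + 1) (e + 1) (by omega), IH m (e + 1) hbm, IH m e hbm]
      rcases lt_or_ge e b with heb | heb
      · -- e < b, so e + 1 ≤ b ≤ m
        obtain ⟨A, hA⟩ : ∃ A, a + b - e = A + 1 := ⟨a + b - e - 1, by omega⟩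
        obtain ⟨s, hs⟩ : ∃ s, m - e = s + 1 := ⟨m - e - 1, by omega⟩
        have r1 : a + (b + 1) - (e + 1) = A + 1 := by omega
        have r2 : m + 1 - (e + 1) = s + 1 := by omega
        have r3 : a + b - (e + 1) = A := by omega
        have r4 : m - (e + 1) = s := by omega
        rw [r1, r2, r3, r4, hA, hs, Nat.choose_succ_succ b e]
        push_cast
        linear_combination (-(b.choose (e + 1)) : ℚ) * key A s a
      · -- e ≥ b
        have hbe1 : b.choose (e + 1) = 0 := Nat.choose_eq_zero_of_lt (by omega)
        rcases eq_or_lt_of_le heb with heq | hlt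
        · -- e = b
          subst heq
          have r1 : a + (b + 1) - (b + 1) = a := by omega
          have r2 : a + b - b = a := by omega
          rw [r1, r2, hbe1, Nat.choose_self b, Nat.choose_self (b + 1)]
          have r5 : m + 1 - (b + 1) = m - b := by omega
          rw [r5]
          push_cast
          ring
        · have hb1e : (b + 1).choose (e + 1) = 0 := Nat.choose_eq_zero_of_lt (by omega)
          have hbe : b.choose e = 0 := Nat.choose_eq_zero_of_lt (by omega)
          rw [hbe1, hb1e, hbe]
          push_cast
          ring

theorem stmt_11 (n a b d : ℕ) (hb : b ≤ n) (hd : a + b ≥ d) :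
    ∑ k ∈ Finset.range (n + 1),
      (a.choose k : ℚ) * b.choose (n - k) * (n - k).choose d * H k =
    ((a + b - d).choose (n - d) : ℚ) * b.choose d *
      (H (n - d) - H (a + b - d) + H a) := by
  exact main a b n d hb
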